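/- Let X ∈ ℝ^{d×n}, let M be a symmetric positive semidefinite d×d matrix with XX^T + M positive definite, and suppose X satisfies the SSS property at level m with constant Λ_m. Then for every u ∈ ℝ^d and every S ⊆ {1,…,n} with |S| = m, ‖(X^T (XX^T + M)^{-1} M u)_S‖₂ ≤ (√Λ_m · λ_max(M) / λ_min(XX^T + M)) · ‖u‖₂. -/

import Mathlib

open Matrix

-- Largest eigenvalue of a symmetric real matrix (junk value `0` if not Hermitian).
open Classical in
noncomputable def lamMax {d : ℕ} (A : Matrix (Fin d) (Fin d) ℝ) : ℝ :=
  if h : A.IsHermitian then ⨆ i, h.eigenvalues i else 0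

-- Smallest eigenvalue of a symmetric real matrix (junk value `0` if not Hermitian).
open Classical in
noncomputable def lamMin {d : ℕ} (A : Matrix (Fin d) (Fin d) ℝ) : ℝ :=
  if h : A.IsHermitian then ⨅ i, h.eigenvalues i else 0

-- Euclidean norm of a vector.
noncomputable def norm2 {n : ℕ} (v : Fin n → ℝ) : ℝ := Real.sqrt (∑ i, v i ^ 2)

-- Support of a vector, as a `Finset`.
open Classical in
noncomputable def supp {n : ℕ} (v : Fin n → ℝ) : Finset (Fin n) :=
  Finset.univ.filter (fun i => v i ≠ 0)

-- `restrict S v` equals `v` on `S` and `0` outside `S`.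
open Classical in
noncomputable def restrict {n : ℕ} (S : Finset (Fin n)) (v : Fin n → ℝ) : Fin n → ℝ :=
  fun i => if i ∈ S then v i else 0

-- Hard thresholding: keep the `k` coordinates of largest absolute value
-- (ties broken by the fixed index ordering), zero out the rest.
open Classical in
noncomputable def HT {n : ℕ} (k : ℕ) (r : Fin n → ℝ) : Fin n → ℝ := fun i =>
  if (Finset.univ.filter (fun j => |r i| < |r j| ∨ (|r j| = |r i| ∧ j < i))).card < k
  then r i else 0

-- `gramOn X S = X_S * (X_S)ᵀ`, the Gram matrix of the columns of `X` indexed by `S`.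
def gramOn {d n : ℕ} (X : Matrix (Fin d) (Fin n) ℝ) (S : Finset (Fin n)) :
    Matrix (Fin d) (Fin d) ℝ :=
  fun a b => ∑ i ∈ S, X a i * X b i

-- ===== auxiliary lemmas =====

private lemma sumSq_eq_dot {d : ℕ} (v : Fin d → ℝ) : ∑ i, v i ^ 2 = v ⬝ᵥ v := by
  simp [dotProduct, sq]

private lemma unitary_dot {d : ℕ} {U : Matrix (Fin d) (Fin d) ℝ}
    (h : star U * U = 1) (x y : Fin d → ℝ) : (U *ᵥ x) ⬝ᵥ (U *ᵥ y) = x ⬝ᵥ y := by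
  have ht : Uᵀ = star U := by
    rw [star_eq_conjTranspose, conjTranspose_eq_transpose_of_trivial]
  rw [dotProduct_mulVec, ← vecMul_transpose, vecMul_vecMul, ht, h, vecMul_one]

private lemma eig_decomp {d : ℕ} {A : Matrix (Fin d) (Fin d) ℝ} (hA : A.IsHermitian)
    (v : Fin d → ℝ) :
    ∃ w : Fin d → ℝ, (∑ i, v i ^ 2 = ∑ i, w i ^ 2) ∧
      (∑ i, (A *ᵥ v) i ^ 2 = ∑ i, (hA.eigenvalues i * w i) ^ 2) ∧
      (v ⬝ᵥ (A *ᵥ v) = ∑ i, hA.eigenvalues i * w i ^ 2) := by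
  set U : Matrix (Fin d) (Fin d) ℝ := (hA.eigenvectorUnitary : Matrix (Fin d) (Fin d) ℝ) with hUdef
  have hsU : star U * U = 1 := Unitary.coe_star_mul_self hA.eigenvectorUnitary
  have hUs : U * star U = 1 := Unitary.coe_mul_star_self hA.eigenvectorUnitary
  set w : Fin d → ℝ := star U *ᵥ v with hwdef
  have hv : v = U *ᵥ w := by
    rw [hwdef, mulVec_mulVec, hUs, one_mulVec]
  have hspec : U * diagonal hA.eigenvalues * star U = A := by
    have h0 := hA.spectral_theorem
    rw [show (RCLike.ofReal ∘ hA.eigenvalues : Fin d → ℝ) = hA.eigenvalues from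
      funext fun i => by simp] at h0
    exact h0.symm
  have hAv : A *ᵥ v = U *ᵥ (fun i => hA.eigenvalues i * w i) := by
    have hdw : (fun i => hA.eigenvalues i * w i) = diagonal hA.eigenvalues *ᵥ w := by
      ext i
      rw [mulVec_diagonal]
    rw [hdw, hwdef, mulVec_mulVec, mulVec_mulVec, hspec]
  refine ⟨w, ?_, ?_, ?_⟩
  · rw [sumSq_eq_dot, sumSq_eq_dot]
    conv_lhs => rw [hv]
    rw [unitary_dot hsU]
  · rw [sumSq_eq_dot, sumSq_eq_dot]
    conv_lhs => rw [hAv]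
    rw [unitary_dot hsU]
  · conv_lhs => rw [hAv]
    conv_lhs => rw [hv]
    rw [unitary_dot hsU]
    simp only [dotProduct]
    exact Finset.sum_congr rfl fun i _ => by ring

private lemma sumSq_mulVec_le {d : ℕ} {A : Matrix (Fin d) (Fin d) ℝ} (hA : A.IsHermitian)
    {c : ℝ} (hc : ∀ i, |hA.eigenvalues i| ≤ c) (v : Fin d → ℝ) :
    ∑ i, (A *ᵥ v) i ^ 2 ≤ c ^ 2 * ∑ i, v i ^ 2 := by
  obtain ⟨w, h1, h2, _⟩ := eig_decomp hA v
  rw [h1, h2, Finset.mul_sum]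
  refine Finset.sum_le_sum fun i _ => ?_
  have he : (hA.eigenvalues i * w i) ^ 2 = hA.eigenvalues i ^ 2 * w i ^ 2 := by ring
  rw [he]
  have h3 : hA.eigenvalues i ^ 2 ≤ c ^ 2 := by
    rw [← sq_abs]
    exact pow_le_pow_left₀ (abs_nonneg _) (hc i) 2
  exact mul_le_mul_of_nonneg_right h3 (sq_nonneg _)

private lemma le_sumSq_mulVec {d : ℕ} {A : Matrix (Fin d) (Fin d) ℝ} (hA : A.IsHermitian)
    {c : ℝ} (hc0 : 0 ≤ c) (hc : ∀ i, c ≤ hA.eigenvalues i) (v : Fin d → ℝ) :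
    c ^ 2 * ∑ i, v i ^ 2 ≤ ∑ i, (A *ᵥ v) i ^ 2 := by
  obtain ⟨w, h1, h2, _⟩ := eig_decomp hA v
  rw [h1, h2, Finset.mul_sum]
  refine Finset.sum_le_sum fun i _ => ?_
  have he : (hA.eigenvalues i * w i) ^ 2 = hA.eigenvalues i ^ 2 * w i ^ 2 := by ring
  rw [he]
  exact mul_le_mul_of_nonneg_right (pow_le_pow_left₀ hc0 (hc i) 2) (sq_nonneg _)

private lemma quad_le {d : ℕ} {A : Matrix (Fin d) (Fin d) ℝ} (hA : A.IsHermitian)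
    {c : ℝ} (hc : ∀ i, hA.eigenvalues i ≤ c) (v : Fin d → ℝ) :
    v ⬝ᵥ (A *ᵥ v) ≤ c * ∑ i, v i ^ 2 := by
  obtain ⟨w, h1, _, h3⟩ := eig_decomp hA v
  rw [h1, h3, Finset.mul_sum]
  exact Finset.sum_le_sum fun i _ => mul_le_mul_of_nonneg_right (hc i) (sq_nonneg _)

private lemma gram_quad {d n : ℕ} (X : Matrix (Fin d) (Fin n) ℝ) (S : Finset (Fin n))
    (v : Fin d → ℝ) :
    v ⬝ᵥ (gramOn X S *ᵥ v) = ∑ i ∈ S, ((Xᵀ *ᵥ v) i) ^ 2 := by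
  calc v ⬝ᵥ (gramOn X S *ᵥ v)
      = ∑ a : Fin d, ∑ b : Fin d, ∑ i ∈ S, (X a i * v a) * (X b i * v b) := by
        simp only [dotProduct, mulVec, gramOn, Finset.mul_sum, Finset.sum_mul]
        refine Finset.sum_congr rfl fun a _ => ?_
        refine Finset.sum_congr rfl fun b _ => ?_
        exact Finset.sum_congr rfl fun i _ => by ring
    _ = ∑ i ∈ S, ∑ a : Fin d, ∑ b : Fin d, (X a i * v a) * (X b i * v b) := by
        exact (Finset.sum_congr rfl fun a _ => Finset.sum_comm).trans Finset.sum_comm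
    _ = ∑ i ∈ S, ((Xᵀ *ᵥ v) i) ^ 2 := by
        refine Finset.sum_congr rfl fun i _ => ?_
        simp only [mulVec, dotProduct, transpose_apply, sq]
        rw [Finset.sum_mul_sum]

private lemma gram_hermitian {d n : ℕ} (X : Matrix (Fin d) (Fin n) ℝ) (S : Finset (Fin n)) :
    (gramOn X S).IsHermitian := by
  ext a b
  simp only [conjTranspose_apply, gramOn, star_trivial]
  exact Finset.sum_congr rfl fun i _ => by ring

private lemma gram_psd {d n : ℕ} (X : Matrix (Fin d) (Fin n) ℝ) (S : Finset (Fin n)) :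
    (gramOn X S).PosSemidef := by
  refine .of_dotProduct_mulVec_nonneg (gram_hermitian X S) fun x => ?_
  have hx : star x = x := funext fun i => star_trivial _
  rw [hx, gram_quad]
  exact Finset.sum_nonneg fun i _ => sq_nonneg _

theorem stmt7 {d n : ℕ} (m : ℕ) (X : Matrix (Fin d) (Fin n) ℝ)
    (M : Matrix (Fin d) (Fin d) ℝ) (hM : M.PosSemidef) (hXM : (X * Xᵀ + M).PosDef)
    (Λ : ℝ) (hSSS : ∀ S : Finset (Fin n), S.card = m → lamMax (gramOn X S) ≤ Λ) :
    ∀ (u : Fin d → ℝ) (S : Finset (Fin n)), S.card = m →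
      norm2 (restrict S ((Xᵀ * (X * Xᵀ + M)⁻¹ * M).mulVec u))
        ≤ Real.sqrt Λ * lamMax M / lamMin (X * Xᵀ + M) * norm2 u := by
  intro u S hS
  by_cases hd : d = 0
  · subst hd
    have h0 : ∀ i, ((Xᵀ * (X * Xᵀ + M)⁻¹ * M).mulVec u) i = 0 := by
      intro i
      simp [mulVec, dotProduct]
    have hL : norm2 (restrict S ((Xᵀ * (X * Xᵀ + M)⁻¹ * M).mulVec u)) = 0 := by
      simp [norm2, restrict, h0]
    have hR : norm2 u = 0 := by simp [norm2]
    rw [hL, hR, mul_zero]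
  haveI : Nonempty (Fin d) := ⟨⟨0, Nat.pos_of_ne_zero hd⟩⟩
  set A : Matrix (Fin d) (Fin d) ℝ := X * Xᵀ + M with hAdef
  have hAh : A.IsHermitian := hXM.1
  have hMh : M.IsHermitian := hM.1
  have hGh : (gramOn X S).IsHermitian := gram_hermitian X S
  -- eigenvalue bounds
  set μ : ℝ := lamMin A with hμdef
  have hμ : lamMin A = ⨅ i, hAh.eigenvalues i := dif_pos hAh
  have hμle : ∀ i, μ ≤ hAh.eigenvalues i := by
    intro i
    rw [hμdef, hμ]
    exact ciInf_le (Set.Finite.bddBelow (Set.finite_range _)) i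
  have hμpos : 0 < μ := by
    obtain ⟨i, hi⟩ := exists_eq_ciInf_of_finite (f := hAh.eigenvalues)
    rw [hμdef, hμ, ← hi]
    exact hXM.eigenvalues_pos i
  set ν : ℝ := lamMax M with hνdef
  have hν : lamMax M = ⨆ i, hMh.eigenvalues i := dif_pos hMh
  have hνle : ∀ i, |hMh.eigenvalues i| ≤ ν := by
    intro i
    rw [abs_of_nonneg (hM.eigenvalues_nonneg i), hνdef, hν]
    exact le_ciSup (Set.Finite.bddAbove (Set.finite_range _)) i
  have hν0 : 0 ≤ ν := le_trans (abs_nonneg _) (hνle (Classical.arbitrary _))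
  have hG : lamMax (gramOn X S) = ⨆ i, hGh.eigenvalues i := dif_pos hGh
  have hGle : ∀ i, hGh.eigenvalues i ≤ Λ := by
    intro i
    refine le_trans ?_ (hSSS S hS)
    rw [hG]
    exact le_ciSup (Set.Finite.bddAbove (Set.finite_range _)) i
  have hΛ0 : 0 ≤ Λ :=
    le_trans ((gram_psd X S).eigenvalues_nonneg (Classical.arbitrary _))
      (hGle (Classical.arbitrary _))
  -- the vector v
  set v : Fin d → ℝ := A⁻¹ *ᵥ (M *ᵥ u) with hvdef
  have hdet : IsUnit A.det := isUnit_iff_ne_zero.mpr hXM.det_pos.ne'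
  have hAv : A *ᵥ v = M *ᵥ u := by
    rw [hvdef, mulVec_mulVec, Matrix.mul_nonsing_inv A hdet, one_mulVec]
  have ht : (Xᵀ * A⁻¹ * M) *ᵥ u = Xᵀ *ᵥ v := by
    rw [hvdef, ← mulVec_mulVec, ← mulVec_mulVec]
  -- squared norms
  set s : ℝ := ∑ i, u i ^ 2 with hsdef
  have hs0 : 0 ≤ s := Finset.sum_nonneg fun i _ => sq_nonneg _
  have h3 : ∑ i, (M *ᵥ u) i ^ 2 ≤ ν ^ 2 * s := sumSq_mulVec_le hMh hνle u
  have h2 : μ ^ 2 * ∑ i, v i ^ 2 ≤ ν ^ 2 * s := by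
    calc μ ^ 2 * ∑ i, v i ^ 2 ≤ ∑ i, (A *ᵥ v) i ^ 2 :=
          le_sumSq_mulVec hAh hμpos.le hμle v
      _ = ∑ i, (M *ᵥ u) i ^ 2 := by rw [hAv]
      _ ≤ ν ^ 2 * s := h3
  have hv2 : ∑ i, v i ^ 2 ≤ ν ^ 2 * s / μ ^ 2 := by
    rw [le_div_iff₀ (by positivity)]
    linarith [h2]
  have h1 : ∑ i ∈ S, ((Xᵀ *ᵥ v) i) ^ 2 ≤ Λ * (ν ^ 2 * s / μ ^ 2) := by
    calc ∑ i ∈ S, ((Xᵀ *ᵥ v) i) ^ 2 = v ⬝ᵥ (gramOn X S *ᵥ v) := (gram_quad X S v).symm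
      _ ≤ Λ * ∑ i, v i ^ 2 := quad_le hGh hGle v
      _ ≤ Λ * (ν ^ 2 * s / μ ^ 2) := mul_le_mul_of_nonneg_left hv2 hΛ0
  -- restrict sum
  have hrs : ∑ i, (restrict S (Xᵀ *ᵥ v) i) ^ 2 = ∑ i ∈ S, ((Xᵀ *ᵥ v) i) ^ 2 := by
    have hterm : ∀ i, (restrict S (Xᵀ *ᵥ v) i) ^ 2
        = if i ∈ S then ((Xᵀ *ᵥ v) i) ^ 2 else 0 := by
      intro i
      by_cases h : i ∈ S <;> simp [restrict, h]
    rw [Finset.sum_congr rfl fun i _ => hterm i, Finset.sum_ite_mem, Finset.univ_inter]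
  -- final computation with square roots
  have key : ∑ i, (restrict S (Xᵀ *ᵥ v) i) ^ 2 ≤ (Real.sqrt Λ * ν / μ * Real.sqrt s) ^ 2 := by
    have heq : (Real.sqrt Λ * ν / μ * Real.sqrt s) ^ 2 = Λ * (ν ^ 2 * s / μ ^ 2) := by
      rw [mul_pow, div_pow, mul_pow, Real.sq_sqrt hΛ0, Real.sq_sqrt hs0]
      ring
    rw [heq, hrs]
    exact h1
  have hrhs0 : 0 ≤ Real.sqrt Λ * ν / μ * Real.sqrt s := by positivity
  have : norm2 (restrict S (Xᵀ *ᵥ v)) ≤ Real.sqrt Λ * ν / μ * Real.sqrt s := by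
    rw [norm2]
    calc Real.sqrt (∑ i, (restrict S (Xᵀ *ᵥ v) i) ^ 2)
        ≤ Real.sqrt ((Real.sqrt Λ * ν / μ * Real.sqrt s) ^ 2) := Real.sqrt_le_sqrt key
      _ = Real.sqrt Λ * ν / μ * Real.sqrt s := Real.sqrt_sq hrhs0
  calc norm2 (restrict S ((Xᵀ * A⁻¹ * M).mulVec u))
      = norm2 (restrict S (Xᵀ *ᵥ v)) := by rw [show (Xᵀ * A⁻¹ * M).mulVec u = (Xᵀ * A⁻¹ * M) *ᵥ u from rfl, ht]
    _ ≤ Real.sqrt Λ * ν / μ * Real.sqrt s := this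
    _ = Real.sqrt Λ * lamMax M / lamMin A * norm2 u := by rw [norm2]
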